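/- There exists a unique trace-free 2×2 matrix W(ξ,ν) = [[X(ξ,ν), Y(ξ,ν)],[Z(ξ,ν), −X(ξ,ν)]] with entries in ξ⁻¹ν⁻¹·𝒜[ε,ε⁻¹][[ξ⁻¹,ν⁻¹]] satisfying the two equations: ε∂(W(ξ,ν)) + [U(ξ), W(ξ,ν)] + [∇(ν)(U(ξ)), R(ξ)] = 0, where ∇(ν)(U(ξ)) = [[0, −∇(ν)(q)],[∇(ν)(r), 0]]; and 2X(ξ,ν) + 2a(ξ)X(ξ,ν) + c(ξ)Y(ξ,ν) + b(ξ)Z(ξ,ν) = 0. Moreover this unique W equals ∇(ν)(R(ξ)). -/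

import Mathlib

set_option synthInstance.maxHeartbeats 1000000
set_option maxHeartbeats 1000000

noncomputable section

open scoped BigOperators

/-- Index set of the generators `qᵢ, rᵢ` of 𝒜. -/
inductive NLSVar : Type
  | q : ℕ → NLSVar
  | r : ℕ → NLSVar

/-- 𝒜 = ℂ[q₀, r₀, q₁, r₁, …]. -/
abbrev NLSA : Type := MvPolynomial NLSVar ℂ

/-- 𝒜[ε, ε⁻¹], as Laurent polynomials in ε over 𝒜. -/
abbrev NLSE : Type := LaurentPolynomial NLSA

instance : CommRing NLSE := inferInstance
instance : Algebra ℂ NLSE := inferInstance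

/-- The generator qᵢ viewed in 𝒜[ε,ε⁻¹]. -/
def qv (i : ℕ) : NLSE := LaurentPolynomial.C (MvPolynomial.X (NLSVar.q i))

/-- The generator rᵢ viewed in 𝒜[ε,ε⁻¹]. -/
def rv (i : ℕ) : NLSE := LaurentPolynomial.C (MvPolynomial.X (NLSVar.r i))

/-- ε ∈ 𝒜[ε,ε⁻¹]. -/
def eps : NLSE := LaurentPolynomial.T 1

/-- ε⁻¹ ∈ 𝒜[ε,ε⁻¹]. -/
def epsInv : NLSE := LaurentPolynomial.T (-1)

/-- Membership in the subring 𝒜[ε] ⊆ 𝒜[ε,ε⁻¹]: no negative powers of ε. -/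
def inAE (x : NLSE) : Prop := ∀ n : ℤ, n < 0 → (show ℤ →₀ NLSA from AddMonoidAlgebra.coeff x) n = 0

/-- The Laurent-series ring 𝒜[ε,ε⁻¹][[ξ⁻¹]][ξ]; the Hahn-series exponent `n`
records the power of ξ⁻¹. -/
abbrev NLSL : Type := LaurentSeries NLSE

instance : CommRing NLSL := inferInstance
instance : Algebra ℂ NLSL := inferInstance

/-- ξ as a Laurent series in ξ⁻¹. -/
def xiL : NLSL := HahnSeries.single (-1 : ℤ) 1

/-- Apply a zero-preserving map to all coefficients of a Laurent series. -/
def coeffMap {R S : Type*} [Zero R] [Zero S] (f : ZeroHom R S)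
    (x : HahnSeries ℤ R) : HahnSeries ℤ S where
  coeff n := f (x.coeff n)
  isPWO_support' := x.isPWO_support'.mono (by
    intro n hn
    simp only [Function.mem_support, ne_eq] at hn ⊢
    exact fun h => hn (by rw [h, map_zero]))

/-- The derivation ∂, applied coefficientwise to a Laurent series in ξ⁻¹. -/
def dmap (d : Derivation ℂ NLSE NLSE) : NLSL → NLSL :=
  coeffMap ⟨fun x => d x, map_zero d⟩

/-- `∂` is the (unique) derivation of 𝒜[ε,ε⁻¹] with ∂(qᵢ)=qᵢ₊₁, ∂(rᵢ)=rᵢ₊₁, ∂(ε)=0. -/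
def IsDel (del : Derivation ℂ NLSE NLSE) : Prop :=
  (∀ i, del (qv i) = qv (i + 1)) ∧ (∀ i, del (rv i) = rv (i + 1)) ∧ del eps = 0

/-- The constant embedding 𝒜[ε,ε⁻¹] → 𝒜[ε,ε⁻¹][[ξ⁻¹]][ξ]. -/
def CL (x : NLSE) : NLSL := HahnSeries.C x

/-- The matrix U(ξ) = [[−ξ, −q],[r, ξ]]. -/
def Umat : Matrix (Fin 2) (Fin 2) NLSL :=
  !![-xiL, -(CL (qv 0)); CL (rv 0), xiL]

/-- The matrix [[2+a, b],[c, −a]]. -/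
def Rmat (a b c : NLSL) : Matrix (Fin 2) (Fin 2) NLSL := !![2 + a, b; c, -a]

/-- `a, b, c` are the entries of the (unique) basic matrix resolvent
R(ξ) = [[2+a(ξ), b(ξ)],[c(ξ), −a(ξ)]]. -/
def IsMR (del : Derivation ℂ NLSE NLSE) (a b c : NLSL) : Prop :=
  (∀ n : ℤ, n ≤ 0 → a.coeff n = 0) ∧
  (∀ n : ℤ, n ≤ 0 → b.coeff n = 0) ∧
  (∀ n : ℤ, n ≤ 0 → c.coeff n = 0) ∧
  (∀ n : ℤ, inAE (a.coeff n)) ∧ (∀ n : ℤ, inAE (b.coeff n)) ∧ (∀ n : ℤ, inAE (c.coeff n)) ∧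
  CL eps • (Rmat a b c).map (dmap del)
      + (Umat * Rmat a b c - Rmat a b c * Umat) = 0 ∧
  (Rmat a b c).det = 0

/-- A_j, the ξ^{−j−1}-coefficient of a(ξ). -/
def coA (a : NLSL) (j : ℕ) : NLSE := a.coeff (j + 1 : ℤ)

/-- The NLS derivations D_j: derivations of 𝒜[ε,ε⁻¹] commuting with ∂, annihilating ε,
with D_j(q) = 2^{j+1} ε⁻¹ B_{j+1} and D_j(r) = 2^{j+1} ε⁻¹ C_{j+1}. -/
def IsNLSD (del : Derivation ℂ NLSE NLSE) (b c : NLSL)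
    (D : ℕ → Derivation ℂ NLSE NLSE) : Prop :=
  (∀ j x, D j (del x) = del (D j x)) ∧
  (∀ j, D j eps = 0) ∧
  (∀ j, D j (qv 0) = (2 : NLSE) ^ (j + 1) * epsInv * coA b (j + 1)) ∧
  (∀ j, D j (rv 0) = (2 : NLSE) ^ (j + 1) * epsInv * coA c (j + 1))

end

noncomputable section

/-- The two-variable Laurent-series ring 𝒜[ε,ε⁻¹][[ξ⁻¹,ν⁻¹]][ξ,ν]; the outer
Hahn-series exponent records the power of ν⁻¹, the inner one the power of ξ⁻¹. -/
abbrev NLSL2 : Type := HahnSeries ℤ NLSL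

instance : CommRing NLSL2 := inferInstance
instance : Algebra ℂ NLSL2 := inferInstance

/-- Embedding of series in ξ (constant in ν). -/
def toXi (x : NLSL) : NLSL2 := HahnSeries.C x

/-- A series in ξ re-read as the corresponding series in ν. -/
def toNu (x : NLSL) : NLSL2 :=
  coeffMap ⟨fun e => (HahnSeries.C e : NLSL), map_zero _⟩ x

/-- ν. -/
def nuL : NLSL2 := HahnSeries.single (-1 : ℤ) 1

/-- ν⁻¹. -/
def nuInv : NLSL2 := HahnSeries.single (1 : ℤ) 1

/-- ξ, in the two-variable ring. -/
def xiL2 : NLSL2 := toXi xiL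

/-- ε, in the two-variable ring. -/
def epsL2 : NLSL2 := toXi (CL eps)

lemma dmap_zero (d : Derivation ℂ NLSE NLSE) : dmap d 0 = 0 := by
  ext n
  simp [dmap, coeffMap]

/-- ∂ applied to all 𝒜[ε,ε⁻¹]-coefficients of a two-variable series. -/
def dmap2 (d : Derivation ℂ NLSE NLSE) : NLSL2 → NLSL2 :=
  coeffMap ⟨dmap d, dmap_zero d⟩

/-- The loop operator ∇(ν) = Σ_{j≥0} 2^{−j} ν^{−j−2} D_j, applied to a series in ξ. -/
def nabla (D : ℕ → Derivation ℂ NLSE NLSE) (x : NLSL) : NLSL2 :=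
  HahnSeries.single (2 : ℤ) (1 : NLSL) *
    HahnSeries.ofPowerSeries ℤ NLSL
      (PowerSeries.mk fun j => ((2 : ℂ) ^ j)⁻¹ • dmap (D j) x)

end
noncomputable section

/-- U(ξ), in the two-variable ring. -/
def UXi : Matrix (Fin 2) (Fin 2) NLSL2 := Umat.map toXi

/-- ∇(ν)(U(ξ)) = [[0, −∇(ν)(q)],[∇(ν)(r), 0]]. -/
def nablaU (D : ℕ → Derivation ℂ NLSE NLSE) : Matrix (Fin 2) (Fin 2) NLSL2 :=
  !![0, -(nabla D (CL (qv 0))); nabla D (CL (rv 0)), 0]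

/-- R(ξ), in the two-variable ring. -/
def RXi' (a b c : NLSL) : Matrix (Fin 2) (Fin 2) NLSL2 := (Rmat a b c).map toXi

/-- Membership in ξ⁻¹ν⁻¹·𝒜[ε,ε⁻¹][[ξ⁻¹,ν⁻¹]]. -/
def memXiNu (w : NLSL2) : Prop :=
  (∀ m : ℤ, m ≤ 0 → w.coeff m = 0) ∧ (∀ m n : ℤ, n ≤ 0 → (w.coeff m).coeff n = 0)

/-- The two defining conditions of Lemma 2.1 for a trace-free matrix W(ξ,ν). -/
def WCond (del : Derivation ℂ NLSE NLSE) (D : ℕ → Derivation ℂ NLSE NLSE)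
    (a b c : NLSL) (W : Matrix (Fin 2) (Fin 2) NLSL2) : Prop :=
  (W 1 1 = -W 0 0) ∧
  (∀ i j : Fin 2, memXiNu (W i j)) ∧
  (epsL2 • W.map (dmap2 del) + (UXi * W - W * UXi)
      + (nablaU D * RXi' a b c - RXi' a b c * nablaU D) = 0) ∧
  (2 * W 0 0 + 2 * toXi a * W 0 0 + toXi c * W 0 1 + toXi b * W 1 0 = 0)

section Helpers

variable (D : ℕ → Derivation ℂ NLSE NLSE) (del : Derivation ℂ NLSE NLSE)

lemma lext {x y : NLSL} (h : ∀ n, x.coeff n = y.coeff n) : x = y :=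
  HahnSeries.coeff_injective (funext h)

lemma l2ext {x y : NLSL2} (h : ∀ n, x.coeff n = y.coeff n) : x = y :=
  HahnSeries.coeff_injective (funext h)

lemma dmap_coeff (d : Derivation ℂ NLSE NLSE) (x : NLSL) (n : ℤ) :
    (dmap d x).coeff n = d (x.coeff n) := rfl

lemma dmap2_coeff (d : Derivation ℂ NLSE NLSE) (x : NLSL2) (m : ℤ) :
    (dmap2 d x).coeff m = dmap d (x.coeff m) := rfl

lemma dmap_support (d : Derivation ℂ NLSE NLSE) (x : NLSL) :
    (dmap d x).support ⊆ x.support := by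
  intro k hk
  rw [HahnSeries.mem_support] at hk ⊢
  exact fun h => hk (by rw [dmap_coeff, h, map_zero])

lemma dmap_add (d : Derivation ℂ NLSE NLSE) (x y : NLSL) :
    dmap d (x + y) = dmap d x + dmap d y :=
  lext fun n => by simp [dmap_coeff]

lemma dmap_smul (d : Derivation ℂ NLSE NLSE) (c : ℂ) (x : NLSL) :
    dmap d (c • x) = c • dmap d x :=
  lext fun n => by simp [dmap_coeff, HahnSeries.coeff_smul]

lemma dmap_mul (d : Derivation ℂ NLSE NLSE) (x y : NLSL) :
    dmap d (x * y) = dmap d x * y + x * dmap d y := by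
  refine lext fun n => ?_
  rw [dmap_coeff, HahnSeries.coeff_mul, HahnSeries.coeff_add,
    HahnSeries.coeff_mul_left' x.isPWO_support (dmap_support d x),
    HahnSeries.coeff_mul_right' y.isPWO_support (dmap_support d y),
    map_sum, ← Finset.sum_add_distrib]
  refine Finset.sum_congr rfl fun ij _ => ?_
  rw [Derivation.leibniz]
  simp only [dmap_coeff, smul_eq_mul]
  ring

lemma csmul_mul (c : ℂ) (x y : NLSL) : (c • x) * y = c • (x * y) := by
  refine lext fun n => ?_
  have hsupp : (c • x).support ⊆ x.support := by
    intro k hk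
    rw [HahnSeries.mem_support] at hk ⊢
    rw [HahnSeries.coeff_smul] at hk
    exact fun h => hk (by rw [h, smul_zero])
  rw [HahnSeries.coeff_mul_left' x.isPWO_support hsupp, HahnSeries.coeff_smul,
    HahnSeries.coeff_mul, Finset.smul_sum]
  refine Finset.sum_congr rfl fun ij _ => ?_
  rw [HahnSeries.coeff_smul, smul_mul_assoc]

lemma mul_csmul (c : ℂ) (x y : NLSL) : x * (c • y) = c • (x * y) := by
  rw [mul_comm, csmul_mul, mul_comm]

lemma toXi_mul_coeff (u : NLSL) (w : NLSL2) (m : ℤ) : (toXi u * w).coeff m = u * w.coeff m := by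
  rw [toXi, HahnSeries.C_apply, HahnSeries.coeff_single_zero_mul]

lemma mul_toXi_coeff (u : NLSL) (w : NLSL2) (m : ℤ) : (w * toXi u).coeff m = w.coeff m * u := by
  rw [toXi, HahnSeries.C_apply, HahnSeries.coeff_mul_single_zero]

lemma CL_mul_coeff (u : NLSE) (w : NLSL) (n : ℤ) : (CL u * w).coeff n = u * w.coeff n := by
  rw [CL, HahnSeries.C_apply, HahnSeries.coeff_single_zero_mul]

lemma mul_CL_coeff (u : NLSE) (w : NLSL) (n : ℤ) : (w * CL u).coeff n = w.coeff n * u := by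
  rw [CL, HahnSeries.C_apply, HahnSeries.coeff_mul_single_zero]

lemma xiL_mul_coeff (u : NLSL) (n : ℤ) : (xiL * u).coeff n = u.coeff (n + 1) := by
  have h : (xiL * u).coeff ((n + 1) + (-1)) = 1 * u.coeff (n + 1) := HahnSeries.coeff_single_mul_add
  simpa using h

lemma mul_xiL_coeff (u : NLSL) (n : ℤ) : (u * xiL).coeff n = u.coeff (n + 1) := by
  have h : (u * xiL).coeff ((n + 1) + (-1)) = u.coeff (n + 1) * 1 := HahnSeries.coeff_mul_single_add
  simpa using h

lemma two_mul_coeff2 (w : NLSL2) (m : ℤ) : ((2 : NLSL2) * w).coeff m = (2 : NLSL) * w.coeff m := by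
  rw [two_mul, HahnSeries.coeff_add, two_mul]

lemma two_mul_coeff1 (w : NLSL) (n : ℤ) : ((2 : NLSL) * w).coeff n = (2 : NLSE) * w.coeff n := by
  rw [two_mul, HahnSeries.coeff_add, two_mul]

lemma half_of_add_self_eq_zero {u : NLSE} (h : u + u = 0) : u = 0 := by
  have h2 : (2 : ℂ) • u = 0 := by rw [two_smul]; exact h
  rcases smul_eq_zero.mp h2 with h' | h'
  · exact absurd h' (by norm_num)
  · exact h'

lemma nabla_coeff_nat (x : NLSL) (j : ℕ) :
    (nabla D x).coeff ((j : ℤ) + 2) = ((2 : ℂ) ^ j)⁻¹ • dmap (D j) x := by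
  rw [nabla]
  have h : (HahnSeries.single (2:ℤ) (1:NLSL) * HahnSeries.ofPowerSeries ℤ NLSL
      (PowerSeries.mk fun j => ((2 : ℂ) ^ j)⁻¹ • dmap (D j) x)).coeff ((j:ℤ) + 2)
      = 1 * (HahnSeries.ofPowerSeries ℤ NLSL
        (PowerSeries.mk fun j => ((2 : ℂ) ^ j)⁻¹ • dmap (D j) x)).coeff (j:ℤ) :=
    HahnSeries.coeff_single_mul_add
  rw [h, one_mul, HahnSeries.ofPowerSeries_apply_coeff, PowerSeries.coeff_mk]

lemma nabla_coeff_lt (x : NLSL) (m : ℤ) (hm : m < 2) : (nabla D x).coeff m = 0 := by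
  rw [nabla]
  have h : (HahnSeries.single (2:ℤ) (1:NLSL) * HahnSeries.ofPowerSeries ℤ NLSL
      (PowerSeries.mk fun j => ((2 : ℂ) ^ j)⁻¹ • dmap (D j) x)).coeff ((m - 2) + 2)
      = 1 * (HahnSeries.ofPowerSeries ℤ NLSL
        (PowerSeries.mk fun j => ((2 : ℂ) ^ j)⁻¹ • dmap (D j) x)).coeff (m - 2) :=
    HahnSeries.coeff_single_mul_add
  rw [show m = (m-2)+2 by ring, h, one_mul, HahnSeries.ofPowerSeries_apply]
  apply HahnSeries.embDomain_notin_range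
  rintro ⟨k, hk⟩
  have hk' : (k : ℤ) = m - 2 := hk
  omega

lemma nabla_ext {w : NLSL2} {x : NLSL}
    (h : ∀ j : ℕ, (nabla D x).coeff ((j : ℤ) + 2) = w.coeff ((j : ℤ) + 2))
    (hlow : ∀ m : ℤ, m < 2 → w.coeff m = 0) : nabla D x = w := by
  refine l2ext fun m => ?_
  by_cases hm : m < 2
  · rw [nabla_coeff_lt D x m hm, hlow m hm]
  · rw [show m = ((m - 2).toNat : ℤ) + 2 by omega]
    exact h _

lemma nabla_zero : nabla D (0 : NLSL) = 0 := by
  refine nabla_ext D (fun j => ?_) (fun m hm => rfl)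
  rw [nabla_coeff_nat, dmap_zero, smul_zero, HahnSeries.coeff_zero]

lemma nabla_add (x y : NLSL) : nabla D (x + y) = nabla D x + nabla D y := by
  refine nabla_ext D (fun j => ?_) (fun m hm => ?_)
  · simp only [HahnSeries.coeff_add, nabla_coeff_nat, dmap_add, smul_add]
  · simp only [HahnSeries.coeff_add, nabla_coeff_lt D _ m hm, add_zero]

lemma nabla_neg (x : NLSL) : nabla D (-x) = -nabla D x := by
  have h := nabla_add D x (-x)
  rw [add_neg_cancel, nabla_zero] at h
  exact (neg_eq_of_add_eq_zero_right h.symm).symm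

lemma nabla_sub (x y : NLSL) : nabla D (x - y) = nabla D x - nabla D y := by
  rw [sub_eq_add_neg, nabla_add, nabla_neg, sub_eq_add_neg]

lemma nabla_mul (x y : NLSL) :
    nabla D (x * y) = nabla D x * toXi y + toXi x * nabla D y := by
  refine nabla_ext D (fun j => ?_) (fun m hm => ?_)
  · rw [HahnSeries.coeff_add, mul_toXi_coeff, toXi_mul_coeff, nabla_coeff_nat, nabla_coeff_nat,
      nabla_coeff_nat, dmap_mul, smul_add, csmul_mul, mul_csmul]
  · rw [HahnSeries.coeff_add, mul_toXi_coeff, toXi_mul_coeff, nabla_coeff_lt D _ m hm,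
      nabla_coeff_lt D _ m hm, zero_mul, mul_zero, add_zero]

lemma nabla_eq_zero_of (x : NLSL) (h : ∀ j (n : ℤ), D j (x.coeff n) = 0) : nabla D x = 0 := by
  refine nabla_ext D (fun j => ?_) (fun m hm => rfl)
  rw [nabla_coeff_nat, HahnSeries.coeff_zero]
  have : dmap (D j) x = 0 := lext fun n => by rw [dmap_coeff, h, HahnSeries.coeff_zero]
  rw [this, smul_zero]

lemma deriv_two (d : Derivation ℂ NLSE NLSE) : d (2 : NLSE) = 0 := by
  rw [show (2 : NLSE) = 1 + 1 by norm_num, map_add, Derivation.map_one_eq_zero, add_zero]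

lemma two_coeff (n : ℤ) : (2 : NLSL).coeff n = if n = 0 then (2 : NLSE) else 0 := by
  rw [show (2 : NLSL) = 1 + 1 by norm_num, HahnSeries.coeff_add, HahnSeries.coeff_one]
  split <;> norm_num

lemma nabla_two : nabla D (2 : NLSL) = 0 := by
  refine nabla_eq_zero_of D _ fun j n => ?_
  rw [two_coeff]
  split
  · exact deriv_two _
  · exact map_zero _

lemma nabla_CL_eps (heps : ∀ j, D j eps = 0) : nabla D (CL eps) = 0 := by
  refine nabla_eq_zero_of D _ fun j n => ?_
  rw [CL, HahnSeries.C_apply, HahnSeries.coeff_single]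
  split
  · exact heps j
  · exact map_zero _

lemma nabla_xiL : nabla D xiL = 0 := by
  refine nabla_eq_zero_of D _ fun j n => ?_
  rw [xiL, HahnSeries.coeff_single]
  split
  · exact Derivation.map_one_eq_zero _
  · exact map_zero _

lemma nabla_dmap (hcomm : ∀ j x, D j (del x) = del (D j x)) (x : NLSL) :
    nabla D (dmap del x) = dmap2 del (nabla D x) := by
  refine nabla_ext D (fun j => ?_) (fun m hm => ?_)
  · rw [nabla_coeff_nat, dmap2_coeff, nabla_coeff_nat, dmap_smul]
    congr 1
    exact lext fun n => by rw [dmap_coeff, dmap_coeff, dmap_coeff, dmap_coeff, hcomm]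
  · rw [dmap2_coeff, nabla_coeff_lt D _ m hm, dmap_zero]

end Helpers
section MatrixLevel

variable (D : ℕ → Derivation ℂ NLSE NLSE) (del : Derivation ℂ NLSE NLSE)

lemma toXi_add (u v : NLSL) : toXi (u + v) = toXi u + toXi v := by
  unfold toXi; exact map_add _ u v
lemma toXi_neg (u : NLSL) : toXi (-u) = -toXi u := by
  unfold toXi; exact map_neg _ u
lemma toXi_two : toXi (2 : NLSL) = 2 := by
  unfold toXi; exact map_ofNat _ 2

lemma map_nabla_add (A B : Matrix (Fin 2) (Fin 2) NLSL) :
    (A + B).map (nabla D) = A.map (nabla D) + B.map (nabla D) := by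
  ext i l
  simp [Matrix.map_apply, nabla_add]

lemma map_nabla_sub (A B : Matrix (Fin 2) (Fin 2) NLSL) :
    (A - B).map (nabla D) = A.map (nabla D) - B.map (nabla D) := by
  ext i l
  simp [Matrix.map_apply, nabla_sub]

lemma map_nabla_mul (A B : Matrix (Fin 2) (Fin 2) NLSL) :
    (A * B).map (nabla D) = A.map (nabla D) * B.map toXi + A.map toXi * B.map (nabla D) := by
  ext i l
  simp only [Matrix.map_apply, Matrix.mul_apply, Matrix.add_apply, Fin.sum_univ_two,
    nabla_add, nabla_mul]
  ring

lemma map_nabla_zero : (0 : Matrix (Fin 2) (Fin 2) NLSL).map (nabla D) = 0 := by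
  ext i l
  simp [Matrix.map_apply, nabla_zero]

lemma map_nabla_U : Umat.map (nabla D) = nablaU D := by
  ext i l
  fin_cases i <;> fin_cases l <;>
    simp [Umat, nablaU, Matrix.map_apply, nabla_neg, nabla_xiL]

lemma map_nabla_smul_eps (heps : ∀ j, D j eps = 0) (Z : Matrix (Fin 2) (Fin 2) NLSL) :
    (CL eps • Z).map (nabla D) = epsL2 • Z.map (nabla D) := by
  ext i l
  simp only [Matrix.map_apply, Matrix.smul_apply, smul_eq_mul, nabla_mul,
    nabla_CL_eps D heps, zero_mul, zero_add, epsL2]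

lemma map_nabla_dmap (hcomm : ∀ j x, D j (del x) = del (D j x))
    (Z : Matrix (Fin 2) (Fin 2) NLSL) :
    (Z.map (dmap del)).map (nabla D) = (Z.map (nabla D)).map (dmap2 del) := by
  ext i l
  simp only [Matrix.map_apply, nabla_dmap D del hcomm]

lemma memXiNu_nabla (x : NLSL) (h0 : ∀ n : ℤ, n ≤ 0 → ∀ j, D j (x.coeff n) = 0) :
    memXiNu (nabla D x) := by
  constructor
  · exact fun m hm => nabla_coeff_lt D x m (by omega)
  · intro m n hn
    by_cases hm : m < 2
    · rw [nabla_coeff_lt D x m hm, HahnSeries.coeff_zero]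
    · rw [show m = ((m - 2).toNat : ℤ) + 2 by omega, nabla_coeff_nat,
        HahnSeries.coeff_smul, dmap_coeff, h0 n hn, smul_zero]

end MatrixLevel

section Existence

lemma WCond_nabla (del : Derivation ℂ NLSE NLSE) (hdel : IsDel del)
    (a b c : NLSL) (hR : IsMR del a b c)
    (D : ℕ → Derivation ℂ NLSE NLSE) (hD : IsNLSD del b c D) :
    WCond del D a b c (Matrix.of fun i l => nabla D (Rmat a b c i l)) := by
  obtain ⟨hcomm, heps, -, -⟩ := hD
  obtain ⟨ha, hb, hc, -, -, -, hE, hdet⟩ := hR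
  have hW : (Matrix.of fun i l => nabla D (Rmat a b c i l)) = (Rmat a b c).map (nabla D) := rfl
  refine ⟨?_, ?_, ?_, ?_⟩
  · -- trace-free
    show nabla D (Rmat a b c 1 1) = -nabla D (Rmat a b c 0 0)
    have e1 : Rmat a b c 1 1 = -a := by simp [Rmat]
    have e0 : Rmat a b c 0 0 = 2 + a := by simp [Rmat]
    rw [e1, e0, nabla_neg, nabla_add, nabla_two, zero_add]
  · -- memXiNu
    have mem00 : memXiNu (nabla D (Rmat a b c 0 0)) := by
      refine memXiNu_nabla D _ fun n hn j => ?_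
      have e : (Rmat a b c 0 0).coeff n = (2 : NLSL).coeff n := by
        simp [Rmat, HahnSeries.coeff_add, ha n hn]
      rw [e, two_coeff]
      split
      · exact deriv_two _
      · exact map_zero _
    have mem01 : memXiNu (nabla D (Rmat a b c 0 1)) := by
      refine memXiNu_nabla D _ fun n hn j => ?_
      have e : (Rmat a b c 0 1).coeff n = 0 := by simp [Rmat, hb n hn]
      rw [e, map_zero]
    have mem10 : memXiNu (nabla D (Rmat a b c 1 0)) := by
      refine memXiNu_nabla D _ fun n hn j => ?_
      have e : (Rmat a b c 1 0).coeff n = 0 := by simp [Rmat, hc n hn]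
      rw [e, map_zero]
    have mem11 : memXiNu (nabla D (Rmat a b c 1 1)) := by
      refine memXiNu_nabla D _ fun n hn j => ?_
      have e : (Rmat a b c 1 1).coeff n = 0 := by
        simp [Rmat, HahnSeries.coeff_neg, ha n hn]
      rw [e, map_zero]
    intro i l
    fin_cases i <;> fin_cases l
    · exact mem00
    · exact mem01
    · exact mem10
    · exact mem11
  · -- PDE
    have h := congrArg (fun M : Matrix (Fin 2) (Fin 2) NLSL => M.map (nabla D)) hE
    rw [map_nabla_add, map_nabla_sub, map_nabla_mul, map_nabla_mul,
      map_nabla_smul_eps D heps, map_nabla_dmap D del hcomm, map_nabla_U,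
      map_nabla_zero] at h
    rw [hW]
    have : epsL2 • ((Rmat a b c).map (nabla D)).map (dmap2 del)
        + (UXi * (Rmat a b c).map (nabla D) - (Rmat a b c).map (nabla D) * UXi)
        + (nablaU D * RXi' a b c - RXi' a b c * nablaU D)
        = epsL2 • ((Rmat a b c).map (nabla D)).map (dmap2 del) +
          (nablaU D * (Rmat a b c).map toXi + Umat.map toXi * (Rmat a b c).map (nabla D) -
            ((Rmat a b c).map (nabla D) * Umat.map toXi + (Rmat a b c).map toXi * nablaU D)) := by
      show _ = _
      rw [show UXi = Umat.map toXi from rfl, show RXi' a b c = (Rmat a b c).map toXi from rfl]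
      abel
    rw [this, h]
  · -- scalar identity
    have h := congrArg (nabla D) hdet
    rw [Rmat, Matrix.det_fin_two_of, nabla_sub, nabla_mul, nabla_mul, nabla_zero,
      nabla_neg, nabla_add, nabla_two, zero_add, toXi_neg, toXi_add, toXi_two] at h
    show 2 * nabla D (Rmat a b c 0 0) + 2 * toXi a * nabla D (Rmat a b c 0 0)
        + toXi c * nabla D (Rmat a b c 0 1) + toXi b * nabla D (Rmat a b c 1 0) = 0
    have e0 : Rmat a b c 0 0 = 2 + a := by simp [Rmat]
    have e01 : Rmat a b c 0 1 = b := by simp [Rmat]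
    have e10 : Rmat a b c 1 0 = c := by simp [Rmat]
    rw [e0, e01, e10, nabla_add, nabla_two, zero_add]
    linear_combination -h

end Existence
section Uniqueness

lemma mul_coeff_eq_zero {u v : NLSL} {s t : ℤ}
    (hu : ∀ k ≤ s, u.coeff k = 0) (hv : ∀ k ≤ t, v.coeff k = 0)
    {n : ℤ} (hn : n ≤ s + t + 1) : (u * v).coeff n = 0 := by
  rw [HahnSeries.coeff_mul]
  refine Finset.sum_eq_zero fun ij hij => ?_
  rw [Finset.mem_addAntidiagonal] at hij
  by_cases h : ij.1 ≤ s
  · rw [hu _ h, zero_mul]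
  · rw [hv ij.2 (by omega), mul_zero]

lemma uniq_aux (del : Derivation ℂ NLSE NLSE) (a b c : NLSL) (hR : IsMR del a b c)
    (V : Matrix (Fin 2) (Fin 2) NLSL2)
    (h11 : V 1 1 = -V 0 0)
    (hmem : ∀ i j : Fin 2, memXiNu (V i j))
    (hpde : epsL2 • V.map (dmap2 del) + (UXi * V - V * UXi) = 0)
    (hsc : 2 * V 0 0 + 2 * toXi a * V 0 0 + toXi c * V 0 1 + toXi b * V 1 0 = 0) :
    V = 0 := by
  obtain ⟨ha, hb, hc, -, -, -, -, -⟩ := hR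
  have h01 := congrFun (congrFun hpde 0) 1
  have h10 := congrFun (congrFun hpde 1) 0
  simp only [Matrix.add_apply, Matrix.sub_apply, Matrix.smul_apply, Matrix.mul_apply,
    Matrix.map_apply, Matrix.zero_apply, Fin.sum_univ_two, UXi, Umat, Matrix.of_apply,
    Matrix.cons_val', Matrix.cons_val_zero, Matrix.cons_val_one, Matrix.head_cons,
    Matrix.head_fin_const, Matrix.empty_val', Matrix.cons_val_fin_one, h11] at h01 h10
  rw [mul_assoc] at hsc
  -- the three coefficient-level recursions
  have E01 : ∀ m n : ℤ,
      ((V 0 1).coeff m).coeff (n + 1) + ((V 0 1).coeff m).coeff (n + 1)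
        = eps * del (((V 0 1).coeff m).coeff n)
          + qv 0 * ((V 0 0).coeff m).coeff n + ((V 0 0).coeff m).coeff n * qv 0 := by
    intro m n
    have e := congrArg (fun w : NLSL2 => (w.coeff m).coeff n) h01
    simp only [epsL2, smul_eq_mul, toXi_neg, neg_mul, mul_neg, neg_neg,
      HahnSeries.coeff_add, HahnSeries.coeff_sub, HahnSeries.coeff_neg, HahnSeries.coeff_zero,
      toXi_mul_coeff, mul_toXi_coeff, CL_mul_coeff, mul_CL_coeff, xiL_mul_coeff, mul_xiL_coeff,
      dmap2_coeff, dmap_coeff] at e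
    first
      | linear_combination e
      | linear_combination -e
  have E10 : ∀ m n : ℤ,
      ((V 1 0).coeff m).coeff (n + 1) + ((V 1 0).coeff m).coeff (n + 1)
        = -(eps * del (((V 1 0).coeff m).coeff n))
          - rv 0 * ((V 0 0).coeff m).coeff n - ((V 0 0).coeff m).coeff n * rv 0 := by
    intro m n
    have e := congrArg (fun w : NLSL2 => (w.coeff m).coeff n) h10
    simp only [epsL2, smul_eq_mul, toXi_neg, neg_mul, mul_neg, neg_neg,
      HahnSeries.coeff_add, HahnSeries.coeff_sub, HahnSeries.coeff_neg, HahnSeries.coeff_zero,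
      toXi_mul_coeff, mul_toXi_coeff, CL_mul_coeff, mul_CL_coeff, xiL_mul_coeff, mul_xiL_coeff,
      dmap2_coeff, dmap_coeff] at e
    first
      | linear_combination e
      | linear_combination -e
  have Esc : ∀ m n : ℤ,
      ((V 0 0).coeff m).coeff n + ((V 0 0).coeff m).coeff n
        = -((a * (V 0 0).coeff m).coeff n + (a * (V 0 0).coeff m).coeff n
          + (c * (V 0 1).coeff m).coeff n + (b * (V 1 0).coeff m).coeff n) := by
    intro m n
    have e := congrArg (fun w : NLSL2 => (w.coeff m).coeff n) hsc
    simp only [two_mul_coeff2, two_mul_coeff1, HahnSeries.coeff_add, HahnSeries.coeff_zero,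
      toXi_mul_coeff, mul_toXi_coeff] at e
    first
      | linear_combination e
      | linear_combination -e
  -- the inductive vanishing of all coefficients
  have hz : ∀ m n : ℤ,
      ((V 0 0).coeff m).coeff n = 0 ∧ ((V 0 1).coeff m).coeff n = 0 ∧
        ((V 1 0).coeff m).coeff n = 0 := by
    intro m
    have base : ∀ n : ℤ, n ≤ 0 → ((V 0 0).coeff m).coeff n = 0 ∧
        ((V 0 1).coeff m).coeff n = 0 ∧ ((V 1 0).coeff m).coeff n = 0 :=
      fun n hn => ⟨(hmem 0 0).2 m n hn, (hmem 0 1).2 m n hn, (hmem 1 0).2 m n hn⟩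
    have main : ∀ N : ℕ, ∀ k : ℤ, k ≤ (N : ℤ) → ((V 0 0).coeff m).coeff k = 0 ∧
        ((V 0 1).coeff m).coeff k = 0 ∧ ((V 1 0).coeff m).coeff k = 0 := by
      intro N
      induction N with
      | zero => exact fun k hk => base k (by exact_mod_cast hk)
      | succ N ih =>
        intro k hk
        by_cases hk' : k ≤ (N : ℤ)
        · exact ih k hk'
        · have hkeq : k = (N : ℤ) + 1 := by push_cast at hk; omega
          subst hkeq
          have hY : ((V 0 1).coeff m).coeff ((N : ℤ) + 1) = 0 := by
            have e := E01 m (N : ℤ)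
            rw [(ih (N : ℤ) le_rfl).1, (ih (N : ℤ) le_rfl).2.1] at e
            simp only [map_zero, mul_zero, zero_mul, add_zero, zero_add] at e
            exact half_of_add_self_eq_zero e
          have hZ : ((V 1 0).coeff m).coeff ((N : ℤ) + 1) = 0 := by
            have e := E10 m (N : ℤ)
            rw [(ih (N : ℤ) le_rfl).1, (ih (N : ℤ) le_rfl).2.2] at e
            simp only [map_zero, mul_zero, zero_mul, add_zero, zero_add, neg_zero,
              sub_zero, zero_sub] at e
            exact half_of_add_self_eq_zero e
          have hX : ((V 0 0).coeff m).coeff ((N : ℤ) + 1) = 0 := by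
            have e := Esc m ((N : ℤ) + 1)
            rw [mul_coeff_eq_zero ha (fun k hk => (ih k hk).1)
                (by omega : (N : ℤ) + 1 ≤ 0 + (N : ℤ) + 1),
              mul_coeff_eq_zero hc (fun k hk => (ih k hk).2.1)
                (by omega : (N : ℤ) + 1 ≤ 0 + (N : ℤ) + 1),
              mul_coeff_eq_zero hb (fun k hk => (ih k hk).2.2)
                (by omega : (N : ℤ) + 1 ≤ 0 + (N : ℤ) + 1)] at e
            simp only [add_zero, zero_add, neg_zero] at e
            exact half_of_add_self_eq_zero e
          exact ⟨hX, hY, hZ⟩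
    intro n
    by_cases hn : n ≤ 0
    · exact base n hn
    · exact main n.toNat n (by omega)
  have h00 : V 0 0 = 0 := l2ext fun m => lext fun n => (hz m n).1
  have h01v : V 0 1 = 0 := l2ext fun m => lext fun n => (hz m n).2.1
  have h10v : V 1 0 = 0 := l2ext fun m => lext fun n => (hz m n).2.2
  have h11v : V 1 1 = 0 := by rw [h11, h00, neg_zero]
  funext i l
  fin_cases i <;> fin_cases l
  · exact h00
  · exact h01v
  · exact h10v
  · exact h11v

end Uniqueness
section Final

lemma dmap_sub (d : Derivation ℂ NLSE NLSE) (x y : NLSL) :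
    dmap d (x - y) = dmap d x - dmap d y :=
  lext fun n => by rw [dmap_coeff, HahnSeries.coeff_sub, map_sub, HahnSeries.coeff_sub,
    dmap_coeff, dmap_coeff]

lemma dmap2_sub (d : Derivation ℂ NLSE NLSE) (x y : NLSL2) :
    dmap2 d (x - y) = dmap2 d x - dmap2 d y :=
  l2ext fun m => by rw [dmap2_coeff, HahnSeries.coeff_sub, dmap_sub, HahnSeries.coeff_sub,
    dmap2_coeff, dmap2_coeff]

lemma WCond_unique (del : Derivation ℂ NLSE NLSE)
    (a b c : NLSL) (hR : IsMR del a b c)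
    (D : ℕ → Derivation ℂ NLSE NLSE)
    (W W' : Matrix (Fin 2) (Fin 2) NLSL2)
    (hW : WCond del D a b c W) (hW' : WCond del D a b c W') : W = W' := by
  obtain ⟨t1, m1, p1, s1⟩ := hW
  obtain ⟨t2, m2, p2, s2⟩ := hW'
  have hmap : (W - W').map (dmap2 del) = W.map (dmap2 del) - W'.map (dmap2 del) := by
    funext i l
    simp only [Matrix.sub_apply, Matrix.map_apply, dmap2_sub]
  have hV := uniq_aux del a b c hR (W - W')
    (by simp only [Matrix.sub_apply, t1, t2]; ring)
    (by
      intro i j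
      refine ⟨fun m hm => ?_, fun m n hn => ?_⟩
      · simp only [Matrix.sub_apply, HahnSeries.coeff_sub, (m1 i j).1 m hm,
          (m2 i j).1 m hm, sub_zero]
      · simp only [Matrix.sub_apply, HahnSeries.coeff_sub, (m1 i j).2 m n hn,
          (m2 i j).2 m n hn, sub_zero])
    (by
      have key : epsL2 • (W - W').map (dmap2 del) + (UXi * (W - W') - (W - W') * UXi)
          = (epsL2 • W.map (dmap2 del) + (UXi * W - W * UXi)
              + (nablaU D * RXi' a b c - RXi' a b c * nablaU D))
            - (epsL2 • W'.map (dmap2 del) + (UXi * W' - W' * UXi)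
              + (nablaU D * RXi' a b c - RXi' a b c * nablaU D)) := by
        rw [hmap, smul_sub, mul_sub, sub_mul]
        abel
      rw [key, p1, p2, sub_zero])
    (by
      simp only [Matrix.sub_apply]
      linear_combination s1 - s2)
  exact sub_eq_zero.mp hV

end Final

/-- Lemma 2.1: existence and uniqueness of W(ξ,ν), and W = ∇(ν)(R(ξ)). -/
theorem nls_W_exists_unique_eq_nabla_R
    (del : Derivation ℂ NLSE NLSE) (hdel : IsDel del)
    (a b c : NLSL) (hR : IsMR del a b c)
    (D : ℕ → Derivation ℂ NLSE NLSE) (hD : IsNLSD del b c D) :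
    (∃! W : Matrix (Fin 2) (Fin 2) NLSL2, WCond del D a b c W) ∧
    (∀ W : Matrix (Fin 2) (Fin 2) NLSL2, WCond del D a b c W →
      W = Matrix.of fun i l => nabla D (Rmat a b c i l)) := by
  have hex := WCond_nabla del hdel a b c hR D hD
  exact ⟨⟨Matrix.of fun i l => nabla D (Rmat a b c i l), hex,
      fun W hW => WCond_unique del a b c hR D W _ hW hex⟩,
    fun W hW => WCond_unique del a b c hR D W _ hW hex⟩


end
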